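/- For every s ∈ ℝ, the function σ ↦ ℌ(σ) − σ·s attains a unique minimum over the open interval (σ₋, σ₊), and the minimizer is σ* = σ̄ + σ̂·tanh(σ̂·s/δ). -/

import Mathlib

private lemma tanh_facts (t : ℝ) :
    -1 < Real.tanh t ∧ Real.tanh t < 1 ∧
    (1/2) * (Real.log (1 + Real.tanh t) - Real.log (1 - Real.tanh t)) = t := by
  have hc : 0 < Real.cosh t := Real.cosh_pos t
  have h1 : Real.cosh t + Real.sinh t = Real.exp t := Real.cosh_add_sinh t
  have h2 : Real.cosh t - Real.sinh t = Real.exp (-t) := Real.cosh_sub_sinh t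
  have he1 : 0 < Real.exp t := Real.exp_pos t
  have he2 : 0 < Real.exp (-t) := Real.exp_pos _
  have ht : Real.tanh t = Real.sinh t / Real.cosh t := Real.tanh_eq_sinh_div_cosh t
  have e1 : 1 + Real.tanh t = Real.exp t / Real.cosh t := by
    rw [ht, ← h1]; field_simp
  have e2 : 1 - Real.tanh t = Real.exp (-t) / Real.cosh t := by
    rw [ht, ← h2]; field_simp
  have hp1 : 0 < 1 + Real.tanh t := by rw [e1]; positivity
  have hp2 : 0 < 1 - Real.tanh t := by rw [e2]; positivity
  refine ⟨by linarith, by linarith, ?_⟩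
  have key : (1 + Real.tanh t) / (1 - Real.tanh t) = Real.exp (2*t) := by
    rw [e1, e2]
    rw [div_div_div_eq, div_mul_eq_div_div, mul_div_assoc, div_self (ne_of_gt hc),
      mul_one, ← Real.exp_sub]
    ring_nf
  rw [← Real.log_div (ne_of_gt hp1) (ne_of_gt hp2), key, Real.log_exp]; ring

private noncomputable def Fpen (t u : ℝ) : ℝ :=
  (1/2) * ((1+u) * Real.log (1+u) + (1-u) * Real.log (1-u)) - t * u

private lemma hasDerivAt_Fpen (t x : ℝ) (h1 : -1 < x) (h2 : x < 1) :
    HasDerivAt (Fpen t) ((1/2) * (Real.log (1+x) - Real.log (1-x)) - t) x := by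
  have hp1 : (0:ℝ) < 1 + x := by linarith
  have hp2 : (0:ℝ) < 1 - x := by linarith
  have ha : HasDerivAt (fun u : ℝ => 1 + u) 1 x := by
    simpa using (hasDerivAt_id x).const_add (1:ℝ)
  have hb : HasDerivAt (fun u : ℝ => 1 - u) (-1) x := by
    exact (hasDerivAt_id x).const_sub (1:ℝ)
  have hla : HasDerivAt (fun u : ℝ => Real.log (1+u)) ((1+x)⁻¹) x := by
    convert ha.log (ne_of_gt hp1) using 1; ring
  have hlb : HasDerivAt (fun u : ℝ => Real.log (1-u)) (-(1-x)⁻¹) x := by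
    convert hb.log (ne_of_gt hp2) using 1; ring
  have hA : HasDerivAt (fun u : ℝ => (1+u) * Real.log (1+u))
      (1 * Real.log (1+x) + (1+x) * (1+x)⁻¹) x := ha.mul hla
  have hB : HasDerivAt (fun u : ℝ => (1-u) * Real.log (1-u))
      ((-1) * Real.log (1-x) + (1-x) * (-(1-x)⁻¹)) x := hb.mul hlb
  have hts : HasDerivAt (fun u : ℝ => t * u) t x := by
    simpa using (hasDerivAt_id x).const_mul t
  have := (((hA.add hB).const_mul (1/2 : ℝ)).sub hts)
  refine this.congr_deriv ?_
  rw [mul_inv_cancel₀ (ne_of_gt hp1), mul_neg, mul_inv_cancel₀ (ne_of_gt hp2)]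
  ring

private lemma Fpen_min (t u : ℝ) (h1 : -1 < u) (h2 : u < 1) (hne : u ≠ Real.tanh t) :
    Fpen t (Real.tanh t) < Fpen t u := by
  obtain ⟨hT1, hT2, hA⟩ := tanh_facts t
  set w := Real.tanh t with hw
  have hcont : ∀ a b : ℝ, -1 < a → b < 1 → ContinuousOn (Fpen t) (Set.Icc a b) := by
    intro a b ha hb x hx
    exact (hasDerivAt_Fpen t x (by rcases hx with ⟨c,d⟩; linarith)
      (by rcases hx with ⟨c,d⟩; linarith)).continuousAt.continuousWithinAt
  have hderiv : ∀ x : ℝ, -1 < x → x < 1 →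
      deriv (Fpen t) x = (1/2) * (Real.log (1+x) - Real.log (1-x)) - t := fun x hx1 hx2 =>
    (hasDerivAt_Fpen t x hx1 hx2).deriv
  rcases lt_or_gt_of_ne hne with hlt | hgt
  · -- u < w : Fpen strictly decreasing on [u, w]
    have := strictAntiOn_of_deriv_neg (convex_Icc u w) (hcont u w h1 hT2) (fun x hx => by
      rw [interior_Icc] at hx
      rcases hx with ⟨hx1, hx2⟩
      rw [hderiv x (by linarith) (by linarith)]
      have l1 : Real.log (1+x) < Real.log (1+w) := Real.log_lt_log (by linarith) (by linarith)
      have l2 : Real.log (1-w) < Real.log (1-x) := Real.log_lt_log (by linarith) (by linarith)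
      nlinarith)
    exact this ⟨le_refl u, le_of_lt hlt⟩ ⟨le_of_lt hlt, le_refl w⟩ hlt
  · -- w < u : Fpen strictly increasing on [w, u]
    have := strictMonoOn_of_deriv_pos (convex_Icc w u) (hcont w u hT1 h2) (fun x hx => by
      rw [interior_Icc] at hx
      rcases hx with ⟨hx1, hx2⟩
      rw [hderiv x (by linarith) (by linarith)]
      have l1 : Real.log (1+w) < Real.log (1+x) := Real.log_lt_log (by linarith) (by linarith)
      have l2 : Real.log (1-x) < Real.log (1-w) := Real.log_lt_log (by linarith) (by linarith)
      nlinarith)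
    exact this ⟨le_refl w, le_of_lt hgt⟩ ⟨le_of_lt hgt, le_refl u⟩ hgt

/-- For every `s ∈ ℝ`, the function `σ ↦ ℌ(σ) − σ·s` attains a unique minimum
over `(σ₋, σ₊)`, and the minimizer is `σ* = σ̄ + σ̂·tanh(σ̂·s/δ)`. -/
theorem penalty_function_unique_minimizer (σm σp : ℝ) (hσm : 0 < σm) (hσ : σm < σp)
    (σbar σhat : ℝ) (hbar : σbar = (σp + σm) / 2) (hhat : σhat = (σp - σm) / 2)
    (δ : ℝ) (hδ : 0 < δ)
    (ℌ : ℝ → ℝ)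
    (hℌ : ∀ σ, ℌ σ = (δ / (2 * σhat)) *
      ((σ - σm) * Real.log ((σ - σm) / σhat) + (σp - σ) * Real.log ((σp - σ) / σhat))) :
    ∀ s : ℝ,
      σbar + σhat * Real.tanh (σhat * s / δ) ∈ Set.Ioo σm σp ∧
      (∀ σ ∈ Set.Ioo σm σp, σ ≠ σbar + σhat * Real.tanh (σhat * s / δ) →
        ℌ (σbar + σhat * Real.tanh (σhat * s / δ))
          - (σbar + σhat * Real.tanh (σhat * s / δ)) * s < ℌ σ - σ * s) := by
  intro s
  have hhat0 : 0 < σhat := by rw [hhat]; linarith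
  set t : ℝ := σhat * s / δ with htdef
  obtain ⟨hT1, hT2, -⟩ := tanh_facts t
  set w : ℝ := Real.tanh t with hwdef
  -- the key change-of-variables identity
  have key : ∀ u : ℝ, ℌ (σbar + σhat * u) - (σbar + σhat * u) * s = δ * Fpen t u - σbar * s := by
    intro u
    have e1' : σbar + σhat * u - σm = σhat * (1 + u) := by rw [hbar, hhat]; ring
    have e2' : σp - (σbar + σhat * u) = σhat * (1 - u) := by rw [hbar, hhat]; ring
    have e1 : (σbar + σhat * u - σm) / σhat = 1 + u := by
      rw [e1', mul_div_cancel_left₀ _ (ne_of_gt hhat0)]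
    have e2 : (σp - (σbar + σhat * u)) / σhat = 1 - u := by
      rw [e2', mul_div_cancel_left₀ _ (ne_of_gt hhat0)]
    rw [hℌ, e1, e2, e1', e2', Fpen]
    have hts : δ * (t * u) = σhat * s * u := by
      rw [htdef]; field_simp
    field_simp
    nlinarith [hts]
  constructor
  · constructor
    · nlinarith
    · nlinarith
  · intro σ hσmem hσne
    rcases hσmem with ⟨hσ1, hσ2⟩
    set u : ℝ := (σ - σbar) / σhat with hu
    have hσu : σ = σbar + σhat * u := by rw [hu]; field_simp; ring
    have hu1 : -1 < u := by
      rw [hu, lt_div_iff₀ hhat0]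
      nlinarith
    have hu2 : u < 1 := by
      rw [hu, div_lt_iff₀ hhat0]
      nlinarith
    have hune : u ≠ w := by
      intro h
      apply hσne
      rw [hσu, h]
    have := Fpen_min t u hu1 hu2 hune
    have lhs := key w
    have rhs := key u
    rw [← hσu] at rhs
    rw [lhs, rhs]
    nlinarith
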